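/- If a subset Q ⊆ S(W) is a suspension from a linear subspace U and also a suspension from a linear subspace V, then Q is a suspension from the intersection U ∩ V. -/

import Mathlib

open scoped RealInnerProductSpace

variable {W : Type*} [NormedAddCommGroup W] [InnerProductSpace ℝ W] [FiniteDimensional ℝ W]

/-- The suspension of a subset `P` of the unit sphere `S(W)` from a linear subspace `V ⊆ W`:
the set of unit vectors `x` such that the orthogonal projection `P_V x` of `x` to `V` is zero,
or is nonzero and normalizes to a point of `P`. -/
noncomputable def susp (V : Submodule ℝ W) (P : Set W) : Set W :=
  {x : W | ‖x‖ = 1 ∧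
    (((V.orthogonalProjection x : W) = 0) ∨
      ((V.orthogonalProjection x : W) ≠ 0 ∧
        ‖(V.orthogonalProjection x : W)‖⁻¹ • (V.orthogonalProjection x : W) ∈ P))}

/-- `Q ⊆ S(W)` is a suspension from the linear subspace `V` if `Q = Susp_V(Q ∩ V)`. -/
def IsSuspensionFrom (Q : Set W) (V : Submodule ℝ W) : Prop :=
  Q = susp V (Q ∩ (V : Set W))

lemma sub_orthogonalProjection_mem_orthogonal {K : Submodule ℝ W} (v : W) :
    v - (Submodule.orthogonalProjectionOnto K v : W) ∈ Kᗮ :=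
  Submodule.sub_starProjection_mem_orthogonal v

lemma orthogonalProjection_orthogonalProjection_of_le {U V : Submodule ℝ W} (h : U ≤ V) (x : W) :
    Submodule.orthogonalProjectionOnto U (Submodule.orthogonalProjectionOnto V x : W) =
      Submodule.orthogonalProjectionOnto U x :=
  Submodule.orthogonalProjectionOnto_starProjection_of_le h x

lemma orthogonalProjection_eq_self_iff {K : Submodule ℝ W} {v : W} :
    (Submodule.orthogonalProjectionOnto K v : W) = v ↔ v ∈ K :=
  Submodule.starProjection_eq_self_iff

lemma susp_mem_of_proj_zero {Q : Set W} {K : Submodule ℝ W}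
    (h : IsSuspensionFrom Q K) {x : W} (hx : ‖x‖ = 1)
    (hp : (Submodule.orthogonalProjectionOnto K x : W) = 0) : x ∈ Q := by
  rw [h]; exact ⟨hx, Or.inl hp⟩

lemma susp_iff_of_proj_ne_zero {Q : Set W} {K : Submodule ℝ W}
    (h : IsSuspensionFrom Q K) {x : W} (hx : ‖x‖ = 1)
    (hp : (Submodule.orthogonalProjectionOnto K x : W) ≠ 0) :
    (x ∈ Q ↔ ‖(Submodule.orthogonalProjectionOnto K x : W)‖⁻¹ • (Submodule.orthogonalProjectionOnto K x : W) ∈ Q) := by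
  constructor
  · intro hxQ
    rw [h] at hxQ
    rcases hxQ.2 with h0 | ⟨_, hmem⟩
    · exact absurd h0 hp
    · exact hmem.1
  · intro hu
    rw [h]
    exact ⟨hx, Or.inr ⟨hp, hu, K.smul_mem _ (Submodule.orthogonalProjectionOnto K x).2⟩⟩

omit [FiniteDimensional ℝ W] in
lemma norm_inv_smul_smul {c : ℝ} (hc : 0 < c) (v : W) :
    ‖c • v‖⁻¹ • (c • v) = ‖v‖⁻¹ • v := by
  rw [norm_smul, Real.norm_of_nonneg hc.le, smul_smul, mul_inv, mul_comm c⁻¹,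
    mul_assoc, inv_mul_cancel₀ (ne_of_gt hc), mul_one]

lemma exists_orthogonal_proj_eq (U V : Submodule ℝ W) {v : W}
    (hvV : v ∈ V) (hv : ∀ m ∈ U ⊓ V, ⟪v, m⟫ = 0) :
    ∃ z ∈ Uᗮ, (Submodule.orthogonalProjectionOnto V z : W) = v := by
  set f : W →ₗ[ℝ] W := V.subtype ∘ₗ (Submodule.orthogonalProjectionOnto V : W →L[ℝ] V).toLinearMap with hf
  have hfz : ∀ z : W, f z = (Submodule.orthogonalProjectionOnto V z : W) := fun z => rfl
  set X : Submodule ℝ W := Uᗮ.map f with hX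
  have hXV : X ≤ V := by
    rintro _ ⟨z, hz, rfl⟩
    exact (Submodule.orthogonalProjectionOnto V z).2
  set p : W := (Submodule.orthogonalProjectionOnto X v : W) with hp
  have hpX : p ∈ X := (Submodule.orthogonalProjectionOnto X v).2
  have hdX : v - p ∈ Xᗮ := sub_orthogonalProjection_mem_orthogonal v
  have hdV : v - p ∈ V := V.sub_mem hvV (hXV hpX)
  have hdU : v - p ∈ U := by
    rw [← Submodule.orthogonal_orthogonal U, Submodule.mem_orthogonal]
    intro z hz
    have h1 : ⟪f z, v - p⟫ = 0 :=
      Submodule.inner_right_of_mem_orthogonal (Submodule.mem_map_of_mem hz) hdX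
    have h2 : ⟪z - f z, v - p⟫ = 0 :=
      Submodule.inner_left_of_mem_orthogonal hdV
        (by rw [hfz]; exact sub_orthogonalProjection_mem_orthogonal z)
    have hzz : z = f z + (z - f z) := by abel
    rw [hzz, inner_add_left, h1, h2, add_zero]
  have hd0 : v - p = 0 := by
    have h3 : ⟪v, v - p⟫ = 0 := hv _ ⟨hdU, hdV⟩
    have h4 : ⟪p, v - p⟫ = 0 :=
      Submodule.inner_right_of_mem_orthogonal hpX hdX
    have h5 : ⟪v - p, v - p⟫ = 0 := by rw [inner_sub_left, h3, h4, sub_zero]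
    exact inner_self_eq_zero.mp h5
  have hvX : v ∈ X := by
    have hvp : v = p := sub_eq_zero.mp hd0
    rw [hvp]; exact hpX
  obtain ⟨z, hz, hze⟩ := hvX
  exact ⟨z, hz, by rw [← hfz]; exact hze⟩

/-- If `Q ⊆ S(W)` is a suspension from `U` and also a suspension from `V`, then `Q` is a
suspension from the intersection `U ∩ V`. -/
theorem isSuspensionFrom_inf {Q : Set W} {U V : Submodule ℝ W}
    (hU : IsSuspensionFrom Q U) (hV : IsSuspensionFrom Q V) :
    IsSuspensionFrom Q (U ⊓ V) := by
  have hQS : ∀ x ∈ Q, ‖x‖ = 1 := by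
    intro x hx; rw [hU] at hx; exact hx.1
  unfold IsSuspensionFrom
  ext x
  simp only [susp, Set.mem_setOf_eq, Submodule.orthogonalProjection]
  by_cases hx1 : ‖x‖ = 1
  swap
  · exact ⟨fun h => absurd (hQS x h) hx1, fun h => absurd h.1 hx1⟩
  by_cases hpU : (Submodule.orthogonalProjectionOnto U x : W) = 0
  · have hinf : (Submodule.orthogonalProjectionOnto (U ⊓ V) x : W) = 0 := by
      have h := orthogonalProjection_orthogonalProjection_of_le
        (inf_le_left : U ⊓ V ≤ U) x
      rw [← h, hpU, map_zero, Submodule.coe_zero]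
    exact ⟨fun _ => ⟨hx1, Or.inl hinf⟩, fun _ => susp_mem_of_proj_zero hU hx1 hpU⟩
  · set p : W := (Submodule.orthogonalProjectionOnto U x : W) with hpdef
    set u : W := ‖p‖⁻¹ • p with hudef
    have hpnorm : (0 : ℝ) < ‖p‖ := norm_pos_iff.mpr hpU
    have hu1 : ‖u‖ = 1 := norm_smul_inv_norm hpU
    have huU : u ∈ U := U.smul_mem _ (Submodule.orthogonalProjectionOnto U x).2
    have hune : u ≠ 0 := by intro h; rw [h, norm_zero] at hu1; exact one_ne_zero hu1.symm
    have hxu : x ∈ Q ↔ u ∈ Q := susp_iff_of_proj_ne_zero hU hx1 hpU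
    set r : W := (Submodule.orthogonalProjectionOnto (U ⊓ V) u : W) with hrdef
    have hrmem : r ∈ U ⊓ V := (Submodule.orthogonalProjectionOnto (U ⊓ V) u).2
    have hkey : r = ‖p‖⁻¹ • (Submodule.orthogonalProjectionOnto (U ⊓ V) x : W) := by
      rw [hrdef, hudef, map_smul,
        orthogonalProjection_orthogonalProjection_of_le (inf_le_left : U ⊓ V ≤ U) x,
        Submodule.coe_smul]
    have hrx : (Submodule.orthogonalProjectionOnto (U ⊓ V) x : W) = ‖p‖ • r := by
      rw [hkey, smul_smul, mul_inv_cancel₀ hpnorm.ne', one_smul]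
    set s : W := (Submodule.orthogonalProjectionOnto V u : W) - r with hsdef
    have hsV : s ∈ V := V.sub_mem (Submodule.orthogonalProjectionOnto V u).2 hrmem.2
    have hsperp : ∀ m ∈ U ⊓ V, ⟪s, m⟫ = 0 := by
      intro m hm
      have h1 : ⟪u - (Submodule.orthogonalProjectionOnto V u : W), m⟫ = 0 :=
        Submodule.inner_left_of_mem_orthogonal hm.2
          (sub_orthogonalProjection_mem_orthogonal u)
      have h2 : ⟪u - r, m⟫ = 0 :=
        Submodule.inner_left_of_mem_orthogonal hm
          (sub_orthogonalProjection_mem_orthogonal u)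
      have hs2 : s = (u - r) - (u - (Submodule.orthogonalProjectionOnto V u : W)) := by
        rw [hsdef]; abel
      rw [hs2, inner_sub_left, h1, h2, sub_zero]
    obtain ⟨z, hzU, hzV⟩ := exists_orthogonal_proj_eq U V hsV hsperp
    set y' : W := u - z with hy'def
    have hPUy' : (Submodule.orthogonalProjectionOnto U y' : W) = u := by
      rw [hy'def, map_sub, Submodule.coe_sub,
        orthogonalProjection_eq_self_iff.mpr huU,
        Submodule.orthogonalProjectionOnto_apply_of_mem_orthogonal hzU,
        Submodule.coe_zero, sub_zero]
    have hy'0 : y' ≠ 0 := by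
      intro h
      rw [h, map_zero, Submodule.coe_zero] at hPUy'
      exact hune hPUy'.symm
    have hn : (0 : ℝ) < ‖y'‖ := norm_pos_iff.mpr hy'0
    set y : W := ‖y'‖⁻¹ • y' with hydef
    have hy1 : ‖y‖ = 1 := norm_smul_inv_norm hy'0
    have hPUy : (Submodule.orthogonalProjectionOnto U y : W) = ‖y'‖⁻¹ • u := by
      rw [hydef, map_smul, Submodule.coe_smul, hPUy']
    have hPUyne : (Submodule.orthogonalProjectionOnto U y : W) ≠ 0 := by
      rw [hPUy]; exact smul_ne_zero (inv_ne_zero hn.ne') hune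
    have hyu : y ∈ Q ↔ u ∈ Q := by
      have h := susp_iff_of_proj_ne_zero hU hy1 hPUyne
      rw [hPUy, norm_inv_smul_smul (inv_pos.mpr hn), hu1, inv_one, one_smul] at h
      exact h
    have hPVy' : (Submodule.orthogonalProjectionOnto V y' : W) = r := by
      rw [hy'def, map_sub, Submodule.coe_sub, hzV, hsdef, sub_sub_cancel]
    have hPVy : (Submodule.orthogonalProjectionOnto V y : W) = ‖y'‖⁻¹ • r := by
      rw [hydef, map_smul, Submodule.coe_smul, hPVy']
    by_cases hr0 : r = 0
    · have hyQ : y ∈ Q := susp_mem_of_proj_zero hV hy1 (by rw [hPVy, hr0, smul_zero])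
      have hxQ : x ∈ Q := hxu.mpr (hyu.mp hyQ)
      have hPx0 : (Submodule.orthogonalProjectionOnto (U ⊓ V) x : W) = 0 := by
        rw [hrx, hr0, smul_zero]
      exact ⟨fun _ => ⟨hx1, Or.inl hPx0⟩, fun _ => hxQ⟩
    · set w : W := ‖r‖⁻¹ • r with hwdef
      have hwmem : w ∈ U ⊓ V := (U ⊓ V).smul_mem _ hrmem
      have hyw : y ∈ Q ↔ w ∈ Q := by
        have h := susp_iff_of_proj_ne_zero hV hy1
          (by rw [hPVy]; exact smul_ne_zero (inv_ne_zero hn.ne') hr0)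
        rw [hPVy, norm_inv_smul_smul (inv_pos.mpr hn)] at h
        exact h
      have hxw : x ∈ Q ↔ w ∈ Q := hxu.trans (hyu.symm.trans hyw)
      have hPxne : (Submodule.orthogonalProjectionOnto (U ⊓ V) x : W) ≠ 0 := by
        rw [hrx]; exact smul_ne_zero hpnorm.ne' hr0
      have hPxnorm :
          ‖(Submodule.orthogonalProjectionOnto (U ⊓ V) x : W)‖⁻¹ • (Submodule.orthogonalProjectionOnto (U ⊓ V) x : W)
            = w := by
        rw [hrx, norm_inv_smul_smul hpnorm]
      constructor
      · intro hxQ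
        exact ⟨hx1, Or.inr ⟨hPxne, by rw [hPxnorm]; exact ⟨hxw.mp hxQ, hwmem⟩⟩⟩
      · rintro ⟨-, h0 | ⟨-, hmem⟩⟩
        · exact absurd h0 hPxne
        · rw [hPxnorm] at hmem
          exact hxw.mpr hmem.1
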